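/- arXiv:math/0604528 — 2 statements merged into one kernel-verified Lean document; each statement's English description precedes it below -/
import Mathlib

section
/- Let A, B be rings, ρ : A → B a ring homomorphism, and P ∈ B an idempotent. Define φ(a) = Pρ(a)P and ω(a,a') = φ(aa') − φ(a)φ(a'). Then for all a⁰, a¹, ..., a^{2n} ∈ A: φ(a⁰) · ω(a¹,a²) · ω(a³,a⁴) ⋯ ω(a^{2n-1},a^{2n}) = (−1)ⁿ P ρ(a⁰) P [P,ρ(a¹)] [P,ρ(a²)] ⋯ [P,ρ(a^{2n})]. -/
private lemma auxP {B : Type*} [Ring B] (P : B) (l : List B)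
    (hl : ∀ z ∈ l, z * P = z) : ∀ x : B, x * P = x → x * l.prod * P = x * l.prod := by
  induction l with
  | nil => intro x hx; simpa using hx
  | cons z l ih =>
    intro x hx
    rw [List.prod_cons, ← mul_assoc]
    exact ih (fun w hw => hl w (List.mem_cons_of_mem _ hw)) (x * z)
      (by rw [mul_assoc, hl z List.mem_cons_self])

private lemma auxOmega {B : Type*} [Ring B] (P : B) (hP : P * P = P) (x y : B) :
    P * (x * y) * P - (P * x * P) * (P * y * P) = -(P * (P * x - x * P) * (P * y - y * P)) := by
  have hP' : ∀ z : B, P * (P * z) = P * z := fun z => by rw [← mul_assoc, hP]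
  simp only [mul_sub, sub_mul, mul_assoc, hP']
  abel

/-- the product formula
`φ(a⁰)·ω(a¹,a²)⋯ω(a^{2n-1},a^{2n}) = (−1)ⁿ Pρ(a⁰)P [P,ρ(a¹)]⋯[P,ρ(a^{2n})]`,
where `φ(a) = Pρ(a)P` and `ω(a,a') = φ(aa') − φ(a)φ(a')`. -/
theorem stmt3 {A B : Type*} [NonUnitalRing A] [Ring B] (ρ : A →ₙ+* B) (P : B)
    (hP : P * P = P) (n : ℕ) (a : ℕ → A) :
    (P * ρ (a 0) * P) *
      ((List.range n).map (fun i =>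
        (P * ρ (a (2 * i + 1) * a (2 * i + 2)) * P) -
          (P * ρ (a (2 * i + 1)) * P) * (P * ρ (a (2 * i + 2)) * P))).prod
    = (-1 : B) ^ n * (P * ρ (a 0) * P) *
      ((List.range (2 * n)).map (fun i =>
        P * ρ (a (i + 1)) - ρ (a (i + 1)) * P)).prod := by
  induction n with
  | zero => simp
  | succ n ih =>
    have hr : 2 * (n + 1) = (2 * n) + 1 + 1 := by ring
    rw [hr, List.range_succ (n := 2 * n + 1), List.range_succ (n := 2 * n), List.range_succ (n := n)]
    simp only [List.map_append, List.prod_append, List.map_cons, List.map_nil,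
      List.prod_cons, List.prod_nil, mul_one]
    set x := ρ (a (2 * n + 1)) with hx
    set y := ρ (a (2 * n + 2)) with hy
    have hxy : ρ (a (2 * n + 1) * a (2 * n + 2)) = x * y := by rw [map_mul]
    rw [hxy]
    set L := ((List.range n).map (fun i =>
        (P * ρ (a (2 * i + 1) * a (2 * i + 2)) * P) -
          (P * ρ (a (2 * i + 1)) * P) * (P * ρ (a (2 * i + 2)) * P))).prod with hL
    set R := ((List.range (2 * n)).map (fun i =>
        P * ρ (a (i + 1)) - ρ (a (i + 1)) * P)).prod with hR
    have hYP : (P * ρ (a 0) * P) * L * P = (P * ρ (a 0) * P) * L := by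
      apply auxP
      · intro z hz
        simp only [List.mem_map] at hz
        obtain ⟨i, _, rfl⟩ := hz
        simp [sub_mul, mul_assoc, hP]
      · rw [mul_assoc, hP]
    rw [← mul_assoc, auxOmega P hP x y, mul_neg,
      show P * (P * x - x * P) * (P * y - y * P)
        = P * ((P * x - x * P) * (P * y - y * P)) from mul_assoc _ _ _,
      ← mul_assoc, hYP, ih, pow_succ]
    noncomm_ring
end

section
/- Let u be a complex number with |Im(u)| ≤ √3 · Re(u − 1) (i.e. u lies in the closed region Ū = {z : |Im z| ≤ √3 Re(z−1)}). Then for all λ ≥ 0: |1 + u² + λ|⁻¹ ≤ 2(1+λ)⁻¹, |u| · |1 + u² + λ|⁻¹ ≤ 2(1+λ)^{-1/2}, and |u|² · |1 + u² + λ|⁻¹ ≤ 2. -/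
set_option maxHeartbeats 800000 in
/-- scalar resolvent estimates on the sector
`Ū = {u : |Im u| ≤ √3 (Re u − 1)}`: for `λ ≥ 0`,
`|1+u²+λ|⁻¹ ≤ 2(1+λ)⁻¹`, `|u|·|1+u²+λ|⁻¹ ≤ 2(1+λ)^{-1/2}` and `|u|²·|1+u²+λ|⁻¹ ≤ 2`. -/
theorem stmt9 (u : ℂ) (hu : |u.im| ≤ Real.sqrt 3 * (u.re - 1))
    (lam : ℝ) (hlam : 0 ≤ lam) :
    ‖1 + u ^ 2 + (lam : ℂ)‖⁻¹ ≤ 2 * (1 + lam)⁻¹ ∧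
    ‖u‖ * ‖1 + u ^ 2 + (lam : ℂ)‖⁻¹ ≤ 2 * (1 + lam) ^ (-(1 / 2) : ℝ) ∧
    ‖u‖ ^ 2 * ‖1 + u ^ 2 + (lam : ℂ)‖⁻¹ ≤ 2 := by
  set a := u.re with ha
  set b := u.im with hb
  have h3 : (0:ℝ) < Real.sqrt 3 := by positivity
  have hx : 1 ≤ a := by nlinarith [abs_nonneg b, hu]
  have hy : b ^ 2 ≤ 3 * (a - 1) ^ 2 := by
    have h1 : |b| ^ 2 ≤ (Real.sqrt 3 * (a - 1)) ^ 2 :=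
      pow_le_pow_left₀ (abs_nonneg b) hu 2
    have h2 : Real.sqrt 3 ^ 2 = 3 := Real.sq_sqrt (by norm_num)
    rw [sq_abs] at h1
    nlinarith [h1, h2]
  set z := 1 + u ^ 2 + (lam : ℂ) with hzdef
  have hznorm : ‖z‖ ^ 2 = (1 + a ^ 2 - b ^ 2 + lam) ^ 2 + (2 * a * b) ^ 2 := by
    rw [hzdef, Complex.sq_norm, Complex.normSq_apply]
    simp [pow_two, Complex.add_re, Complex.add_im, Complex.mul_re, Complex.mul_im]
    ring
  have hunorm : ‖u‖ ^ 2 = a ^ 2 + b ^ 2 := by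
    rw [Complex.sq_norm, Complex.normSq_apply]; ring
  have hspos : (0:ℝ) < 1 + lam := by linarith
  have hA : (1 + lam) ^ 2 ≤ 4 * ‖z‖ ^ 2 := by
    rw [hznorm]
    nlinarith [sq_nonneg (1 + lam - a ^ 2 - b ^ 2), sq_nonneg (a - 1),
      mul_nonneg (mul_nonneg hlam (sq_nonneg a)) (sub_nonneg.2 hy),
      mul_nonneg (sq_nonneg a) (sub_nonneg.2 hy), sq_nonneg (a*b), hlam, hx,
      mul_nonneg hlam hlam]
  have hB : (a ^ 2 + b ^ 2) ^ 2 ≤ 4 * ‖z‖ ^ 2 := by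
    rw [hznorm]
    rcases le_or_gt (b ^ 2) (a ^ 2) with hcase | hcase
    · nlinarith [mul_nonneg hspos.le (by nlinarith : (0:ℝ) ≤ (1 + lam) + 2 * (a ^ 2 - b ^ 2)),
        sq_nonneg (a ^ 2 - b ^ 2), sq_nonneg (a * b)]
    · have h1 : 0 ≤ b ^ 2 - a ^ 2 := by linarith
      have h2 : b ^ 2 - a ^ 2 ≤ 2 * a ^ 2 := by nlinarith
      have h3' : (b ^ 2 - a ^ 2) ^ 2 ≤ 2 * a ^ 2 * b ^ 2 := by nlinarith
      nlinarith [sq_nonneg ((1 + lam) + (a ^ 2 - b ^ 2)), sq_nonneg (a * b), h3']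
  have hzpos : 0 < ‖z‖ := by nlinarith [hA, norm_nonneg z]
  have h1 : 1 + lam ≤ 2 * ‖z‖ := by nlinarith [hA, norm_nonneg z]
  have hun : (0:ℝ) ≤ ‖u‖ := norm_nonneg u
  have h3' : ‖u‖ ^ 2 ≤ 2 * ‖z‖ := by
    nlinarith [hB, hunorm, norm_nonneg z, sq_nonneg a, sq_nonneg b]
  refine ⟨?_, ?_, ?_⟩
  · have he : ((1 + lam) / 2)⁻¹ = 2 * (1 + lam)⁻¹ := by
      rw [inv_div]; ring
    rw [← he]
    exact inv_anti₀ (by linarith) (by linarith)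
  · have hsq : Real.sqrt (1 + lam) ^ 2 = 1 + lam := Real.sq_sqrt (le_of_lt hspos)
    have hsqpos : 0 < Real.sqrt (1 + lam) := Real.sqrt_pos.2 hspos
    have hprod : (a ^ 2 + b ^ 2) * (1 + lam) ≤ 4 * ‖z‖ ^ 2 := by
      nlinarith [hA, hB, sq_nonneg ((a ^ 2 + b ^ 2) - (1 + lam)), norm_nonneg z, hspos,
        sq_nonneg a, sq_nonneg b]
    have key : ‖u‖ * Real.sqrt (1 + lam) ≤ 2 * ‖z‖ := by
      nlinarith [hprod, hunorm, hsq, mul_nonneg hun hsqpos.le, norm_nonneg z]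
    have hrpow : (1 + lam) ^ (-(1 / 2) : ℝ) = (Real.sqrt (1 + lam))⁻¹ := by
      rw [Real.rpow_neg (le_of_lt hspos), Real.sqrt_eq_rpow]
    rw [hrpow, mul_inv_le_iff₀ hzpos, mul_comm _ ‖z‖]
    calc ‖u‖ = ‖u‖ * Real.sqrt (1 + lam) * (Real.sqrt (1 + lam))⁻¹ := by field_simp
      _ ≤ 2 * ‖z‖ * (Real.sqrt (1 + lam))⁻¹ :=
          mul_le_mul_of_nonneg_right key (inv_nonneg.2 hsqpos.le)
      _ = ‖z‖ * (2 * (Real.sqrt (1 + lam))⁻¹) := by ring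
  · rw [mul_inv_le_iff₀ hzpos]; linarith
end
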